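/- Let A be a finite alphabet, S a semigroup generated by the images of A, and L ⊆ A⁺ a rational (regular) dictionary of S such that the relation R_ε^L = {(u,v) ∈ L × L : p(u) = p(v)} is rational. Then there exist k ∈ ℕ, a rational dictionary K ⊆ L of S, a finite alphabet B, a regular language H ⊆ B*, and a Nivat bimorphism (α, β) from B* to A* such that {(α(w), β(w)) : w ∈ H} = R_ε^K = {(u,v) ∈ K × K : p(u) = p(v)}, and for all x, f, s ∈ B* with x·f·s ∈ H and |f| > k, both α(f) ≠ ε and β(f) ≠ ε. -/

import Mathlib

/-- Extension of a letter map `B → A*` to the induced monoid map `B* → A*`. -/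
def strMap {B A : Type} (α : B → List A) (w : List B) : List A :=
  (w.map α).flatten

/-- A Nivat bimorphism: for each letter `b`, exactly one of `α b`, `β b` is the
empty word, and the other is a single letter. -/
def NivatPair {B A : Type} (α β : B → List A) : Prop :=
  ∀ b : B, (α b = [] ∧ (β b).length = 1) ∨ ((α b).length = 1 ∧ β b = [])

/-- Evaluation of a word over `A` in a semigroup `S` (via the one-point
monoid extension `WithOne S`; nonempty words evaluate in `S` itself). -/
def evalW {A S : Type} [Semigroup S] (f : A → S) (w : List A) : WithOne S :=
  (w.map fun a => (f a : WithOne S)).prod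

/-- A relation on words over `A` is rational if it is the image of a regular
language under a Nivat bimorphism. -/
def IsRationalRel {A : Type} (R : Set (List A × List A)) : Prop :=
  ∃ (B : Type) (_ : Fintype B) (H : Language B), H.IsRegular ∧
    ∃ α β : B → List A, NivatPair α β ∧
      R = {uv | ∃ w ∈ H, uv = (strMap α w, strMap β w)}

namespace Stmt0Aux

open Classical

variable {A B T : Type} {σ σ₁ σ₂ : Type}


/- ### strMap lemmas -/

theorem strMap_nil (α : B → List A) : strMap α [] = [] := rfl

theorem strMap_cons (α : B → List A) (b : B) (w : List B) :
    strMap α (b :: w) = α b ++ strMap α w := by simp [strMap]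

theorem strMap_append (α : B → List A) (u v : List B) :
    strMap α (u ++ v) = strMap α u ++ strMap α v := by simp [strMap]

theorem strMap_eq_nil (α : B → List A) {w : List B} (h : ∀ b ∈ w, α b = []) :
    strMap α w = [] := by
  simp only [strMap, List.flatten_eq_nil_iff, List.mem_map]
  rintro x ⟨b, hb, rfl⟩; exact h b hb

theorem forall_nil_of_strMap_eq_nil (α : B → List A) {w : List B} (h : strMap α w = []) :
    ∀ b ∈ w, α b = [] := by
  simp only [strMap, List.flatten_eq_nil_iff, List.mem_map] at h
  exact fun b hb => h (α b) ⟨b, hb, rfl⟩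

theorem strMap_length_pure (β : B → List A) {w : List B} (h : ∀ b ∈ w, (β b).length = 1) :
    (strMap β w).length = w.length := by
  induction w with
  | nil => rfl
  | cons b w ih =>
      rw [strMap_cons, List.length_append, h b List.mem_cons_self,
        ih fun c hc => h c (List.mem_cons_of_mem _ hc), List.length_cons]
      omega

theorem strMap_length_le (β : B → List A) (hβ : ∀ b, (β b).length ≤ 1) (w : List B) :
    (strMap β w).length ≤ w.length := by
  induction w with
  | nil => simp [strMap_nil]
  | cons b w ih =>
      rw [strMap_cons, List.length_append, List.length_cons]
      have := hβ b; omega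

/- ### DFA closure constructions -/

/-- product DFA for intersections. -/
def prodDFA (M : DFA T σ₁) (N : DFA T σ₂) (acc : Set (σ₁ × σ₂)) : DFA T (σ₁ × σ₂) where
  step p a := (M.step p.1 a, N.step p.2 a)
  start := (M.start, N.start)
  accept := acc

theorem prodDFA_evalFrom (M : DFA T σ₁) (N : DFA T σ₂) (acc : Set (σ₁ × σ₂)) :
    ∀ (w : List T) (p : σ₁ × σ₂),
      (prodDFA M N acc).evalFrom p w = (M.evalFrom p.1 w, N.evalFrom p.2 w) := by
  intro w
  induction w with
  | nil => intro p; rfl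
  | cons a w ih =>
      intro p
      show (prodDFA M N acc).evalFrom ((prodDFA M N acc).step p a) w = _
      rw [ih]
      rfl

theorem prodDFA_eval (M : DFA T σ₁) (N : DFA T σ₂) (acc : Set (σ₁ × σ₂)) (w : List T) :
    (prodDFA M N acc).eval w = (M.eval w, N.eval w) :=
  prodDFA_evalFrom M N acc w _

theorem isRegular_inter_diff {L₁ L₂ : Language T} (h₁ : L₁.IsRegular) (h₂ : L₂.IsRegular) :
    Language.IsRegular {w : List T | w ∈ L₁ ∧ w ∉ L₂} := by
  obtain ⟨σ₁, f₁, M, hM⟩ := h₁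
  obtain ⟨σ₂, f₂, N, hN⟩ := h₂
  refine ⟨σ₁ × σ₂, inferInstance, prodDFA M N {p | p.1 ∈ M.accept ∧ p.2 ∉ N.accept}, ?_⟩
  ext w
  show _ ↔ (w ∈ L₁ ∧ w ∉ L₂)
  rw [← hM, ← hN]
  simp only [DFA.mem_accepts, Set.mem_setOf_eq, DFA.eval, prodDFA_evalFrom]
  exact Iff.rfl

theorem isRegular_inter {L₁ L₂ : Language T} (h₁ : L₁.IsRegular) (h₂ : L₂.IsRegular) :
    Language.IsRegular {w : List T | w ∈ L₁ ∧ w ∈ L₂} := by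
  obtain ⟨σ₁, f₁, M, hM⟩ := h₁
  obtain ⟨σ₂, f₂, N, hN⟩ := h₂
  refine ⟨σ₁ × σ₂, inferInstance, prodDFA M N {p | p.1 ∈ M.accept ∧ p.2 ∈ N.accept}, ?_⟩
  ext w
  show _ ↔ (w ∈ L₁ ∧ w ∈ L₂)
  rw [← hM, ← hN]
  simp only [DFA.mem_accepts, Set.mem_setOf_eq, DFA.eval, prodDFA_evalFrom]
  exact Iff.rfl

/-- preimage of a DFA under a string map. -/
def comapStr (α : B → List A) (M : DFA A σ) : DFA B σ where
  step q b := M.evalFrom q (α b)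
  start := M.start
  accept := M.accept

theorem comapStr_evalFrom (α : B → List A) (M : DFA A σ) :
    ∀ (w : List B) (q : σ), (comapStr α M).evalFrom q w = M.evalFrom q (strMap α w) := by
  intro w
  induction w with
  | nil => intro q; rfl
  | cons b w ih =>
      intro q
      show (comapStr α M).evalFrom ((comapStr α M).step q b) w = _
      rw [ih, strMap_cons, DFA.evalFrom_of_append]
      rfl

theorem isRegular_preimage (α : B → List A) {L' : Language A} (h : L'.IsRegular) :
    Language.IsRegular {w : List B | strMap α w ∈ L'} := by
  obtain ⟨σ, fσ, M, hM⟩ := h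
  refine ⟨σ, fσ, comapStr α M, ?_⟩
  ext w
  rw [DFA.mem_accepts]
  show (comapStr α M).evalFrom M.start w ∈ M.accept ↔ _
  rw [comapStr_evalFrom, ← hM]
  rfl


/-- Splitting off the last produced letter. -/
theorem strMap_split_last {β : B → List A} (hβ : ∀ b, (β b).length ≤ 1) {z : List B}
    {u : List A} {a : A} (h : strMap β z = u ++ [a]) :
    ∃ z₁ b z₂, z = z₁ ++ b :: z₂ ∧ strMap β z₁ = u ∧ β b = [a] ∧ strMap β z₂ = [] := by
  induction z using List.reverseRecOn generalizing u with
  | nil => simp [strMap] at h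
  | append_singleton z' c ih =>
      rw [strMap_append, show strMap β [c] = β c by simp [strMap]] at h
      rcases hc : β c with _ | ⟨a', t⟩
      · rw [hc, List.append_nil] at h
        obtain ⟨z₁, b, z₂, hz, hu, hb, hnil⟩ := ih h
        refine ⟨z₁, b, z₂ ++ [c], by rw [hz]; simp, hu, hb, ?_⟩
        rw [strMap_append, hnil, show strMap β [c] = β c by simp [strMap], hc]; rfl
      · have ht : t = [] := by
          have := hβ c; rw [hc] at this; simpa using this
        subst ht
        rw [hc] at h
        have h2 := List.append_inj' h (by simp)
        obtain ⟨h3, h4⟩ := h2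
        simp only [List.cons.injEq] at h4
        exact ⟨z', c, [], by simp, h3, by rw [hc, h4.1], rfl⟩

/-- Subset-construction DFA recognizing the image of `M.accepts` under `strMap β`. -/
noncomputable def imgDFA (M : DFA B σ) (β : B → List A) : DFA A (Set σ) where
  step T a := {q' | ∃ q ∈ T, ∃ z, strMap β z = [a] ∧ M.evalFrom q z = q'}
  start := {q | ∃ z, strMap β z = [] ∧ M.eval z = q}
  accept := {T | ∃ q ∈ T, q ∈ M.accept}

theorem imgDFA_eval (M : DFA B σ) (β : B → List A) (hβ : ∀ b, (β b).length ≤ 1)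
    (u : List A) : (imgDFA M β).eval u = {q | ∃ z, strMap β z = u ∧ M.eval z = q} := by
  induction u using List.reverseRecOn with
  | nil => rfl
  | append_singleton u a ih =>
      rw [DFA.eval_append_singleton, ih]
      ext q'
      constructor
      · rintro ⟨q, ⟨z₁, hz₁, hq⟩, z, hz, hq'⟩
        refine ⟨z₁ ++ z, by rw [strMap_append, hz₁, hz], ?_⟩
        rw [DFA.eval, DFA.evalFrom_of_append]
        rw [DFA.eval] at hq
        rw [hq, hq']
      · rintro ⟨z, hz, hq'⟩
        obtain ⟨z₁, b, z₂, hsplit, hu, hb, hnil⟩ := strMap_split_last hβ hz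
        refine ⟨M.eval z₁, ⟨z₁, hu, rfl⟩, b :: z₂, ?_, ?_⟩
        · rw [strMap_cons, hb, hnil]; rfl
        · rw [← hq', hsplit, DFA.eval, DFA.evalFrom_of_append]

theorem isRegular_image {L' : Language B} (h : L'.IsRegular) (β : B → List A)
    (hβ : ∀ b, (β b).length ≤ 1) :
    Language.IsRegular {u : List A | ∃ z, z ∈ L' ∧ strMap β z = u} := by
  obtain ⟨σ, fσ, M, hM⟩ := h
  refine ⟨Set σ, Fintype.ofFinite _, imgDFA M β, ?_⟩
  ext u
  rw [DFA.mem_accepts, DFA.eval, ← DFA.eval, imgDFA_eval M β hβ]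
  constructor
  · rintro ⟨q, ⟨z, hz, hq⟩, hacc⟩
    exact ⟨z, by rw [← hM, DFA.mem_accepts, hq]; exact hacc, hz⟩
  · rintro ⟨z, hzL, hz⟩
    exact ⟨M.eval z, ⟨z, hz, rfl⟩, by rw [← hM, DFA.mem_accepts] at hzL; exact hzL⟩


/-- `w` contains a factor of length `n+1` all of whose letters have empty `α`-image. -/
def HasRun (α : B → List A) (n : ℕ) (w : List B) : Prop :=
  ∃ x g s, w = x ++ g ++ s ∧ g.length = n + 1 ∧ ∀ b ∈ g, α b = []

theorem hasRun_of_factor {α : B → List A} {n : ℕ} {w x g s : List B}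
    (hw : w = x ++ g ++ s) (hg : ∀ b ∈ g, α b = []) (hlen : n + 1 ≤ g.length) :
    HasRun α n w := by
  refine ⟨x, g.take (n + 1), g.drop (n + 1) ++ s, ?_, ?_, ?_⟩
  · rw [hw, List.append_assoc, List.append_assoc,
      ← List.append_assoc (List.take (n + 1) g), List.take_append_drop]
  · simp [hlen]
  · exact fun b hb => hg b (List.take_subset _ _ hb)

theorem not_hasRun_nil (α : B → List A) (n : ℕ) : ¬ HasRun α n [] := by
  rintro ⟨x, g, s, h, hlen, -⟩
  have := congrArg List.length h
  simp at this
  omega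

theorem hasRun_snoc_of {α : B → List A} {n : ℕ} {w : List B} (b : B)
    (h : HasRun α n w) : HasRun α n (w ++ [b]) := by
  obtain ⟨x, g, s, rfl, hlen, hg⟩ := h
  exact ⟨x, g, s ++ [b], by simp, hlen, hg⟩

/-- length of the maximal `α`-empty suffix. -/
noncomputable def sfx (α : B → List A) (w : List B) : ℕ :=
  w.foldl (fun i b => if α b = [] then i + 1 else 0) 0

theorem sfx_nil (α : B → List A) : sfx α [] = 0 := rfl

theorem sfx_snoc (α : B → List A) (w : List B) (b : B) :
    sfx α (w ++ [b]) = if α b = [] then sfx α w + 1 else 0 := by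
  simp [sfx, List.foldl_append]

theorem sfx_ge (α : B → List A) {g : List B} (hg : ∀ b ∈ g, α b = []) :
    ∀ x w, w = x ++ g → g.length ≤ sfx α w := by
  induction g using List.reverseRecOn with
  | nil => intro x w _; simp
  | append_singleton g' c ih =>
      intro x w hw
      have hc : α c = [] := hg c (by simp)
      rw [hw, ← List.append_assoc, sfx_snoc, if_pos hc]
      have := ih (fun b hb => hg b (by simp [hb])) x (x ++ g') rfl
      simp only [List.length_append, List.length_cons, List.length_nil]
      omega

theorem sfx_witness (α : B → List A) :
    ∀ (w : List B) (m : ℕ), m ≤ sfx α w →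
      ∃ x g, w = x ++ g ∧ g.length = m ∧ ∀ b ∈ g, α b = [] := by
  intro w
  induction w using List.reverseRecOn with
  | nil =>
      intro m hm
      rw [sfx_nil] at hm
      interval_cases m
      exact ⟨[], [], rfl, rfl, by simp⟩
  | append_singleton w' c ih =>
      intro m hm
      rcases Nat.eq_zero_or_pos m with rfl | hpos
      · exact ⟨w' ++ [c], [], by simp, rfl, by simp⟩
      rw [sfx_snoc] at hm
      by_cases hc : α c = []
      · rw [if_pos hc] at hm
        obtain ⟨x, g, hw, hlen, hg⟩ := ih (m - 1) (by omega)
        refine ⟨x, g ++ [c], by rw [hw]; simp, by simp [hlen]; omega, ?_⟩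
        intro b hb
        rcases List.mem_append.mp hb with h | h
        · exact hg b h
        · simp at h; subst h; exact hc
      · rw [if_neg hc] at hm; omega

theorem hasRun_snoc {α : B → List A} {n : ℕ} {w : List B} {b : B}
    (h : HasRun α n (w ++ [b])) : HasRun α n w ∨ (α b = [] ∧ n ≤ sfx α w) := by
  obtain ⟨x, g, s, hw, hlen, hg⟩ := h
  rcases s.eq_nil_or_concat' with rfl | ⟨s', c, rfl⟩
  · -- g is a suffix: w ++ [b] = x ++ g
    rw [List.append_nil] at hw
    have hgne : g ≠ [] := by intro h; rw [h] at hlen; simp at hlen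
    rcases g.eq_nil_or_concat' with rfl | ⟨g', c, rfl⟩
    · exact absurd rfl hgne
    · rw [← List.append_assoc] at hw
      obtain ⟨hw', hcb⟩ := List.append_inj' hw.symm (by simp)
      simp only [List.cons.injEq] at hcb
      right
      have hcg : α c = [] := hg c (by simp)
      refine ⟨hcb.1 ▸ hcg, ?_⟩
      have := sfx_ge α (g := g') (fun b hb => hg b (by simp [hb])) x w hw'.symm
      have hlg : g'.length = n := by simp at hlen; omega
      omega
  · left
    rw [← List.append_assoc] at hw
    obtain ⟨hw', -⟩ := List.append_inj' hw (by simp)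
    exact ⟨x, g, s', by rw [hw'], hlen, hg⟩

/-- DFA tracking the current `α`-empty run, capped and sticky at `n+1`. -/
noncomputable def runDFA (α : B → List A) (n : ℕ) : DFA B (Fin (n + 2)) where
  step i b :=
    if i.val = n + 1 then i
    else if α b = [] then ⟨min (i.val + 1) (n + 1), by omega⟩ else ⟨0, by omega⟩
  start := ⟨0, by omega⟩
  accept := {i | i.val = n + 1}

theorem runDFA_step (α : B → List A) (n : ℕ) (i : Fin (n + 2)) (b : B) :
    (runDFA α n).step i b =
      if i.val = n + 1 then i
      else if α b = [] then ⟨min (i.val + 1) (n + 1), by omega⟩ else ⟨0, by omega⟩ := rfl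

theorem runDFA_invariant (α : B → List A) (n : ℕ) (w : List B) :
    (¬ HasRun α n w → ((runDFA α n).eval w).val = sfx α w ∧ sfx α w ≤ n) ∧
      (HasRun α n w → ((runDFA α n).eval w).val = n + 1) := by
  induction w using List.reverseRecOn with
  | nil =>
      constructor
      · intro _; exact ⟨rfl, by rw [sfx_nil]; exact Nat.zero_le n⟩
      · intro h; exact absurd h (not_hasRun_nil α n)
  | append_singleton w b ih =>
      rw [DFA.eval_append_singleton]
      by_cases hR : HasRun α n w
      · have hval := ih.2 hR
        have hstep : (runDFA α n).step ((runDFA α n).eval w) b = (runDFA α n).eval w := by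
          rw [runDFA_step, if_pos hval]
        rw [hstep]
        constructor
        · intro hcon; exact absurd (hasRun_snoc_of b hR) hcon
        · intro _; exact hval
      · obtain ⟨hval, hle⟩ := ih.1 hR
        have hne : ¬ ((runDFA α n).eval w).val = n + 1 := by omega
        by_cases hb : α b = []
        · have hstep : ((runDFA α n).step ((runDFA α n).eval w) b).val
              = min (sfx α w + 1) (n + 1) := by
            rw [runDFA_step, if_neg hne, if_pos hb]
            show min (((runDFA α n).eval w).val + 1) (n + 1) = _
            rw [hval]
          constructor
          · intro hcon
            have hslt : sfx α w < n := by
              rcases Nat.lt_or_ge (sfx α w) n with h | h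
              · exact h
              · exfalso
                have hn : n ≤ sfx α w := h
                obtain ⟨x, g, hw, hlen, hg⟩ := sfx_witness α w n hn
                refine hcon ⟨x, g ++ [b], [], by rw [hw]; simp, by simp [hlen], ?_⟩
                intro c hc
                rcases List.mem_append.mp hc with h' | h'
                · exact hg c h'
                · simp at h'; subst h'; exact hb
            rw [hstep, sfx_snoc, if_pos hb]
            omega
          · intro hcon
            rcases hasRun_snoc hcon with h | ⟨-, h⟩
            · exact absurd h hR
            · rw [hstep]; omega
        · have hstep : ((runDFA α n).step ((runDFA α n).eval w) b).val = 0 := by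
            rw [runDFA_step, if_neg hne, if_neg hb]
          constructor
          · intro _
            rw [hstep, sfx_snoc, if_neg hb]
            exact ⟨rfl, by omega⟩
          · intro hcon
            rcases hasRun_snoc hcon with h | ⟨h, -⟩
            · exact absurd h hR
            · exact absurd h hb
      
theorem runDFA_accepts (α : B → List A) (n : ℕ) :
    (runDFA α n).accepts = {w | HasRun α n w} := by
  ext w
  rw [DFA.mem_accepts]
  show ((runDFA α n).eval w).val = n + 1 ↔ _
  constructor
  · intro h
    by_contra hcon
    have := (runDFA_invariant α n w).1 hcon
    omega
  · exact (runDFA_invariant α n w).2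

theorem isRegular_hasRun (α : B → List A) (n : ℕ) :
    Language.IsRegular {w : List B | HasRun α n w} :=
  ⟨Fin (n + 2), inferInstance, runDFA α n, runDFA_accepts α n⟩


/-- length of the maximal `α`-empty prefix. -/
noncomputable def pfxLen (α : B → List A) : List B → ℕ
  | [] => 0
  | b :: w => if α b = [] then pfxLen α w + 1 else 0

theorem pfxLen_witness (α : B → List A) (w : List B) :
    ∃ g s, w = g ++ s ∧ g.length = pfxLen α w ∧ ∀ b ∈ g, α b = [] := by
  induction w with
  | nil => exact ⟨[], [], rfl, rfl, by simp⟩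
  | cons b w ih =>
      by_cases hb : α b = []
      · obtain ⟨g, s, hw, hlen, hg⟩ := ih
        refine ⟨b :: g, s, by rw [hw]; rfl, ?_, ?_⟩
        · show g.length + 1 = _
          rw [pfxLen, if_pos hb, hlen]
        · intro c hc
          rcases List.mem_cons.mp hc with rfl | h
          · exact hb
          · exact hg c h
      · exact ⟨[], b :: w, rfl, by rw [pfxLen]; simp [hb], by simp⟩

/-- Key counting bound: if every `α`-empty factor of `w` has length at most `n`,
then the `β`-image is at most `n` times the `α`-image plus the initial run. -/
theorem run_bound {α β : B → List A} (hNiv : NivatPair α β) (n : ℕ) :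
    ∀ w : List B, (∀ x g s, w = x ++ g ++ s → (∀ b ∈ g, α b = []) → g.length ≤ n) →
      (strMap β w).length ≤ n * (strMap α w).length + pfxLen α w := by
  intro w
  induction w with
  | nil => intro _; simp [strMap_nil, pfxLen]
  | cons b w ih =>
      intro hfac
      have hfac' : ∀ x g s, w = x ++ g ++ s → (∀ c ∈ g, α c = []) → g.length ≤ n := by
        intro x g s hw hg
        exact hfac (b :: x) g s (by rw [hw]; rfl) hg
      have IH := ih hfac'
      rw [strMap_cons, strMap_cons, List.length_append, List.length_append]
      by_cases hb : α b = []
      · have hβb : (β b).length = 1 := by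
          rcases hNiv b with ⟨-, h⟩ | ⟨h, -⟩
          · exact h
          · rw [hb] at h; simp at h
        rw [hb, pfxLen, if_pos hb, hβb]
        simp only [List.length_nil, Nat.zero_add]
        omega
      · have hβb : β b = [] := by
          rcases hNiv b with ⟨h, -⟩ | ⟨-, h⟩
          · exact absurd h hb
          · exact h
        have hαb : (α b).length = 1 := by
          rcases hNiv b with ⟨h, -⟩ | ⟨h, -⟩
          · exact absurd h hb
          · exact h
        have hpfx : pfxLen α w ≤ n := by
          obtain ⟨g, s, hw, hlen, hg⟩ := pfxLen_witness α w
          rw [← hlen]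
          exact hfac [b] g s (by rw [hw]; rfl) hg
        rw [hβb, pfxLen, if_neg hb, hαb]
        simp only [List.length_nil]
        nlinarith [IH]

/-- Infix pumping: a long infix of an accepted word contains a loop. -/
theorem infix_pump (M : DFA B σ) [Fintype σ] (x g s : List B)
    (hlen : Fintype.card σ ≤ g.length) :
    ∃ g₁ g₂ g₃ : List B, g = g₁ ++ g₂ ++ g₃ ∧ g₂ ≠ [] ∧
      ∀ m : ℕ, M.eval (x ++ (g₁ ++ (List.replicate m g₂).flatten ++ g₃) ++ s)
        = M.eval (x ++ g ++ s) := by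
  obtain ⟨q, g₁, g₂, g₃, hg, -, hne, hq, hloop, hq3⟩ :=
    M.evalFrom_split (s := M.eval x) (x := g) (t := M.evalFrom (M.eval x) g) hlen rfl
  refine ⟨g₁, g₂, g₃, hg, hne, fun m => ?_⟩
  have hrep : M.evalFrom q (List.replicate m g₂).flatten = q := by
    induction m with
    | zero => rfl
    | succ k ih =>
        rw [List.replicate_succ, List.flatten_cons, DFA.evalFrom_of_append, hloop, ih]
  have key : ∀ Y : List B, M.eval (x ++ Y ++ s) = M.evalFrom (M.evalFrom (M.eval x) Y) s := by
    intro Y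
    rw [DFA.eval, DFA.evalFrom_of_append, DFA.evalFrom_of_append]
  rw [key, key]
  congr 1
  rw [hg]
  simp only [DFA.evalFrom_of_append]
  rw [hq, hrep, hloop]


theorem strMap_replicate_len (β : B → List A) (m : ℕ) (g : List B) :
    (strMap β ((List.replicate m g).flatten)).length = m * (strMap β g).length := by
  induction m with
  | zero => simp [strMap_nil]
  | succ k ih =>
      rw [List.replicate_succ, List.flatten_cons, strMap_append, List.length_append, ih]
      ring

theorem mem_flatten_replicate {g : List B} {m : ℕ} {b : B}
    (h : b ∈ (List.replicate m g).flatten) : b ∈ g := by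
  rw [List.mem_flatten] at h
  obtain ⟨l, hl, hb⟩ := h
  rw [List.eq_of_mem_replicate hl] at hb
  exact hb

/-- Growing pumping argument: if a long pure infix existed, the `δ`-side
would exceed any given bound. -/
theorem grow_contra [Fintype σ] (M : DFA B σ) (γ δ : B → List A)
    (x g s : List B) (hlen : Fintype.card σ ≤ g.length)
    (hγ : ∀ b ∈ g, γ b = []) (hδ : ∀ b ∈ g, (δ b).length = 1) (bound : ℕ)
    (hbound : ∀ w, M.eval w ∈ M.accept → strMap γ w = strMap γ (x ++ g ++ s) →
      (strMap δ w).length ≤ bound)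
    (hacc : M.eval (x ++ g ++ s) ∈ M.accept) : False := by
  obtain ⟨g₁, g₂, g₃, hgdec, hne, hpump⟩ := infix_pump M x g s hlen
  have hg₁ : ∀ b ∈ g₁, b ∈ g := fun b hb => by rw [hgdec]; simp [hb]
  have hg₂ : ∀ b ∈ g₂, b ∈ g := fun b hb => by rw [hgdec]; simp [hb]
  have hg₃ : ∀ b ∈ g₃, b ∈ g := fun b hb => by rw [hgdec]; simp [hb]
  set m := bound + 1 with hm
  set wm := x ++ (g₁ ++ (List.replicate m g₂).flatten ++ g₃) ++ s with hwm
  have hwmacc : M.eval wm ∈ M.accept := by rw [hwm, hpump m]; exact hacc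
  have hγm : strMap γ wm = strMap γ (x ++ g ++ s) := by
    rw [hwm]
    simp only [strMap_append]
    rw [strMap_eq_nil γ (fun b hb => hγ b (hg₁ b hb)),
      strMap_eq_nil γ (fun b hb => hγ b (hg₂ b (mem_flatten_replicate hb))),
      strMap_eq_nil γ (fun b hb => hγ b (hg₃ b hb)),
      strMap_eq_nil γ hγ]
    simp
  have hub := hbound wm hwmacc hγm
  have h2 : (strMap δ g₂).length = g₂.length :=
    strMap_length_pure δ (fun b hb => hδ b (hg₂ b hb))
  have h3 : 1 ≤ g₂.length := List.length_pos_iff.mpr hne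
  have h4 : (strMap δ ((List.replicate m g₂).flatten)).length = m * (strMap δ g₂).length :=
    strMap_replicate_len δ m g₂
  have hlow : m ≤ (strMap δ wm).length := by
    rw [hwm]
    simp only [strMap_append, List.length_append]
    rw [h4, h2]
    nlinarith
  omega

end Stmt0Aux

open Stmt0Aux

/-- If `L` is a rational dictionary of a semigroup `S`
whose relation `R_ε^L` is rational, then there are `k`, a rational dictionary
`K ⊆ L`, and a regular language `H` with a Nivat bimorphism realizing `R_ε^K`
such that every factor of a word of `H` of length `> k` has nonempty images
under both components of the bimorphism. -/
theorem stmt0 {A S : Type} [Fintype A] [Semigroup S] (f : A → S)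
    (hgen : Subsemigroup.closure (Set.range f) = ⊤)
    (L : Language A) (hLreg : L.IsRegular) (hLne : ∀ w ∈ L, w ≠ [])
    (hLdict : ∀ s : S, ∃ w ∈ L, evalW f w = (s : WithOne S))
    (hLrat : IsRationalRel
      {uv : List A × List A | uv.1 ∈ L ∧ uv.2 ∈ L ∧ evalW f uv.1 = evalW f uv.2}) :
    ∃ (k : ℕ) (K : Language A), K ≤ L ∧ K.IsRegular ∧
      (∀ s : S, ∃ w ∈ K, evalW f w = (s : WithOne S)) ∧
      ∃ (B : Type) (_ : Fintype B) (H : Language B), H.IsRegular ∧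
        ∃ α β : B → List A, NivatPair α β ∧
          {uv : List A × List A | ∃ w ∈ H, uv = (strMap α w, strMap β w)} =
            {uv : List A × List A | uv.1 ∈ K ∧ uv.2 ∈ K ∧ evalW f uv.1 = evalW f uv.2} ∧
          ∀ x g s : List B, x ++ g ++ s ∈ H → g.length > k →
            strMap α g ≠ [] ∧ strMap β g ≠ [] := by
  classical
  obtain ⟨B, hB, H, hHreg, α, β, hNiv, hHeq⟩ := hLrat
  have hβle : ∀ b, (β b).length ≤ 1 := by
    intro b
    rcases hNiv b with ⟨-, h⟩ | ⟨-, h⟩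
    · omega
    · rw [h]; simp
  obtain ⟨σH, fσH, MH, hMH⟩ := hHreg
  haveI := fσH
  set n := Fintype.card σH with hn
  have hmemH : ∀ w : List B, w ∈ H ↔ MH.eval w ∈ MH.accept := by
    intro w
    rw [← hMH]
    rfl
  -- translation between `H` and the relation
  have factR : ∀ w, w ∈ H → strMap α w ∈ L ∧ strMap β w ∈ L ∧
      evalW f (strMap α w) = evalW f (strMap β w) := by
    intro w hw
    have h1 : ((strMap α w, strMap β w) : List A × List A) ∈
        {uv : List A × List A | ∃ w ∈ H, uv = (strMap α w, strMap β w)} := ⟨w, hw, rfl⟩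
    rw [← hHeq] at h1
    exact h1
  have factR2 : ∀ u v : List A, u ∈ L → v ∈ L → evalW f u = evalW f v →
      ∃ w, w ∈ H ∧ strMap α w = u ∧ strMap β w = v := by
    intro u v hu hv he
    have h1 : ((u, v) : List A × List A) ∈
        {uv : List A × List A | uv.1 ∈ L ∧ uv.2 ∈ L ∧ evalW f uv.1 = evalW f uv.2} :=
      ⟨hu, hv, he⟩
    rw [hHeq] at h1
    obtain ⟨w, hw, hp⟩ := h1
    exact ⟨w, hw, (Prod.ext_iff.mp hp.symm).1, (Prod.ext_iff.mp hp.symm).2⟩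
  -- the shrinkable words, and the dictionary K
  set Shr : Language A :=
    {u : List A | ∃ z, z ∈ {w : List B | w ∈ H ∧ HasRun α n w} ∧ strMap β z = u} with hShr
  set K : Language A := {u : List A | u ∈ L ∧ u ∉ Shr} with hKdef
  have hShrReg : Shr.IsRegular :=
    isRegular_image (isRegular_inter ⟨σH, fσH, MH, hMH⟩ (isRegular_hasRun α n)) β hβle
  have hKreg : K.IsRegular := isRegular_inter_diff hLreg hShrReg
  -- Fact A: elements of K are quasi-geodesic
  have factA : ∀ u v : List A, u ∈ L → v ∈ K → evalW f u = evalW f v →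
      v.length ≤ n * (u.length + 1) := by
    intro u v hu hv he
    obtain ⟨w, hwH, hwa, hwb⟩ := factR2 u v hu hv.1 he
    have hnr : ¬ HasRun α n w := fun hr => hv.2 ⟨w, ⟨hwH, hr⟩, hwb⟩
    have hfac : ∀ x g s, w = x ++ g ++ s → (∀ b ∈ g, α b = []) → g.length ≤ n := by
      intro x g s hw hg
      by_contra hcon
      exact hnr (hasRun_of_factor hw hg (by omega))
    have hrb := run_bound hNiv n w hfac
    obtain ⟨g, s', hwdec, hlen, hg⟩ := pfxLen_witness α w
    have hpfx : pfxLen α w ≤ n := by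
      rw [← hlen]
      exact hfac [] g s' (by simpa using hwdec) hg
    rw [hwa, hwb] at hrb
    have hdist : n * (u.length + 1) = n * u.length + n := by ring
    omega
  -- Fact B: K is a dictionary
  have factB : ∀ s : S, ∃ u, u ∈ K ∧ evalW f u = (s : WithOne S) := by
    intro s
    obtain ⟨u₀, hu₀L, hu₀e⟩ := hLdict s
    have hex : ∃ m, ∃ u, u ∈ L ∧ evalW f u = (s : WithOne S) ∧ u.length = m :=
      ⟨u₀.length, u₀, hu₀L, hu₀e, rfl⟩
    obtain ⟨u, huL, hue, hulen⟩ := Nat.find_spec hex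
    refine ⟨u, ⟨huL, ?_⟩, hue⟩
    rintro ⟨w, ⟨hwH, hr⟩, hwb⟩
    obtain ⟨x, g, s', hwdec, hglen, hg⟩ := hr
    have hcard : Fintype.card σH ≤ g.length := by omega
    obtain ⟨g₁, g₂, g₃, hgdec, hg₂ne, hpump⟩ := infix_pump MH x g s' hcard
    have hg₁ : ∀ b ∈ g₁, b ∈ g := fun b hb => by rw [hgdec]; simp [hb]
    have hg₂ : ∀ b ∈ g₂, b ∈ g := fun b hb => by rw [hgdec]; simp [hb]
    have hg₃ : ∀ b ∈ g₃, b ∈ g := fun b hb => by rw [hgdec]; simp [hb]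
    set w' := x ++ (g₁ ++ (List.replicate 0 g₂).flatten ++ g₃) ++ s' with hw'
    have hw'H : w' ∈ H := by
      rw [hmemH, hw', hpump 0, ← hwdec, ← hmemH]
      exact hwH
    -- the α-image is unchanged
    have hα : strMap α w' = strMap α w := by
      rw [hw', hwdec]
      simp only [strMap_append]
      rw [strMap_eq_nil α (fun b hb => hg b (hg₁ b hb)),
        strMap_eq_nil α (fun b hb => hg b (hg₂ b (mem_flatten_replicate hb))),
        strMap_eq_nil α (fun b hb => hg b (hg₃ b hb)),
        strMap_eq_nil α hg]
      simp
    -- the β-image gets strictly shorter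
    have hδ : ∀ b ∈ g, (β b).length = 1 := by
      intro b hb
      rcases hNiv b with ⟨-, h⟩ | ⟨h, -⟩
      · exact h
      · rw [hg b hb] at h; simp at h
    have hβg : (strMap β g).length = g.length := strMap_length_pure β hδ
    have hβg₁ : (strMap β g₁).length = g₁.length :=
      strMap_length_pure β (fun b hb => hδ b (hg₁ b hb))
    have hβg₂ : (strMap β g₂).length = g₂.length :=
      strMap_length_pure β (fun b hb => hδ b (hg₂ b hb))
    have hβg₃ : (strMap β g₃).length = g₃.length :=
      strMap_length_pure β (fun b hb => hδ b (hg₃ b hb))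
    have hg₂pos : 1 ≤ g₂.length := List.length_pos_iff.mpr hg₂ne
    have hshort : (strMap β w').length < (strMap β w).length := by
      rw [hw', hwdec]
      simp only [strMap_append, List.length_append]
      have hglen' : g.length = g₁.length + g₂.length + g₃.length := by
        rw [hgdec]; simp; omega
      rw [hβg, hβg₁, hβg₃, hglen']
      simp [strMap_nil]
      omega
    -- evaluation is preserved
    have heval : evalW f (strMap β w') = (s : WithOne S) := by
      have e1 := (factR w' hw'H).2.2
      have e2 := (factR w hwH).2.2
      rw [← e1, hα, e2, hwb, hue]
    have hmem : ∃ u', u' ∈ L ∧ evalW f u' = (s : WithOne S) ∧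
        u'.length = (strMap β w').length :=
      ⟨strMap β w', (factR w' hw'H).2.1, heval, rfl⟩
    have hlt : (strMap β w').length < Nat.find hex := by
      rw [← hulen, ← hwb]
      exact hshort
    exact Nat.find_min hex hlt hmem
  -- The language H' presenting the restricted relation
  set H' : Language B :=
    {w : List B | (w ∈ H ∧ strMap α w ∈ K) ∧ strMap β w ∈ K} with hH'def
  have hH'reg : H'.IsRegular := by
    have h1 : Language.IsRegular {w : List B | strMap α w ∈ K} := isRegular_preimage α hKreg
    have h2 : Language.IsRegular {w : List B | strMap β w ∈ K} := isRegular_preimage β hKreg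
    exact isRegular_inter (isRegular_inter ⟨σH, fσH, MH, hMH⟩ h1) h2
  obtain ⟨σ', fσ', M', hM'⟩ := hH'reg
  haveI := fσ'
  have hmemH' : ∀ w : List B, w ∈ H' ↔ M'.eval w ∈ M'.accept := by
    intro w
    rw [← hM']
    rfl
  refine ⟨Fintype.card σ', K, fun u hu => hu.1, hKreg, factB, B, hB, H',
    ⟨σ', fσ', M', hM'⟩, α, β, hNiv, ?_, ?_⟩
  · -- the set equality
    ext uv
    constructor
    · rintro ⟨w, hw, rfl⟩
      exact ⟨hw.1.2, hw.2, (factR w hw.1.1).2.2⟩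
    · rintro ⟨h1, h2, h3⟩
      obtain ⟨w, hwH, hwa, hwb⟩ := factR2 uv.1 uv.2 h1.1 h2.1 h3
      refine ⟨w, ⟨⟨hwH, ?_⟩, ?_⟩, ?_⟩
      · rw [hwa]; exact h1
      · rw [hwb]; exact h2
      · rw [hwa, hwb]
  · -- the balancedness property
    intro x g s' hxs hglen
    have hacc : M'.eval (x ++ g ++ s') ∈ M'.accept := (hmemH' _).mp hxs
    constructor
    · -- strMap α g ≠ []
      intro hαg
      have hγ : ∀ b ∈ g, α b = [] := forall_nil_of_strMap_eq_nil α hαg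
      have hδ : ∀ b ∈ g, (β b).length = 1 := by
        intro b hb
        rcases hNiv b with ⟨-, h⟩ | ⟨h, -⟩
        · exact h
        · rw [hγ b hb] at h; simp at h
      refine grow_contra M' α β x g s' (by omega) hγ hδ
        (n * ((strMap α (x ++ g ++ s')).length + 1)) ?_ hacc
      intro w hwacc hwα
      have hwH' : w ∈ H' := (hmemH' w).mpr hwacc
      have hαK : strMap α w ∈ K := hwH'.1.2
      have hβK : strMap β w ∈ K := hwH'.2
      have heq := (factR w hwH'.1.1).2.2
      have := factA (strMap α w) (strMap β w) hαK.1 hβK heq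
      rw [hwα] at this
      exact this
    · -- strMap β g ≠ []
      intro hβg
      have hγ : ∀ b ∈ g, β b = [] := forall_nil_of_strMap_eq_nil β hβg
      have hδ : ∀ b ∈ g, (α b).length = 1 := by
        intro b hb
        rcases hNiv b with ⟨-, h⟩ | ⟨h, -⟩
        · rw [hγ b hb] at h; simp at h
        · exact h
      refine grow_contra M' β α x g s' (by omega) hγ hδ
        (n * ((strMap β (x ++ g ++ s')).length + 1)) ?_ hacc
      intro w hwacc hwβ
      have hwH' : w ∈ H' := (hmemH' w).mpr hwacc
      have hαK : strMap α w ∈ K := hwH'.1.2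
      have hβK : strMap β w ∈ K := hwH'.2
      have heq := (factR w hwH'.1.1).2.2
      have := factA (strMap β w) (strMap α w) hβK.1 hαK heq.symm
      rw [hwβ] at this
      exact this
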